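/- arXiv:1403.2330 — 3 statements merged into one kernel-verified Lean document; each statement's English description precedes it below -/
import Mathlib

section
/- For any block-partitioned matrix X = [[A, B], [C, D]] where A and D are square, the nuclear norm satisfies ‖X‖₊ ≥ ‖[[A,0],[0,D]]‖₊ = ‖A‖₊ + ‖D‖₊. -/
open Matrix BigOperators

/-- Nuclear norm: sum of singular values (square roots of eigenvalues of AᴴA). -/
noncomputable def nuclearNorm {m n : Type*} [Fintype m] [Fintype n] [DecidableEq n]
    (A : Matrix m n ℝ) : ℝ :=
  ∑ i, Real.sqrt ((Matrix.isHermitian_conjTranspose_mul_self A).eigenvalues i)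

/-- Squared Frobenius norm. -/
def frobSq {m n : Type*} [Fintype m] [Fintype n] (A : Matrix m n ℝ) : ℝ :=
  ∑ i, ∑ j, (A i j) ^ 2

/-- Frobenius norm. -/
noncomputable def frobNorm {m n : Type*} [Fintype m] [Fintype n] (A : Matrix m n ℝ) : ℝ :=
  Real.sqrt (frobSq A)

section Aux
variable {n : Type*} [Fintype n] [DecidableEq n]

lemma psd_diag_nonneg {M : Matrix n n ℝ} (h : M.PosSemidef) (i : n) : 0 ≤ M i i := by
  have := (posSemidef_iff_dotProduct_mulVec.mp h).2 (Pi.single i 1)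
  simpa [dotProduct, mulVec, Pi.single_apply, Finset.sum_ite_eq, Finset.sum_ite_eq'] using this

omit [DecidableEq n] in
lemma col_sq (M : Matrix n n ℝ) (i : n) : (Mᴴ * M) i i = ∑ k, M k i ^ 2 := by
  simp [Matrix.mul_apply, Matrix.conjTranspose_apply, sq]

omit [DecidableEq n] in
lemma trace_conjTranspose_mul (M N : Matrix n n ℝ) :
    (Mᴴ * N).trace = ∑ i, ∑ k, M k i * N k i := by
  simp [Matrix.trace, Matrix.diag, Matrix.mul_apply, Matrix.conjTranspose_apply]

lemma key_ineq (X W : Matrix n n ℝ) (hW : (1 - Wᴴ * W).PosSemidef) :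
    (Wᴴ * X).trace ≤ nuclearNorm X := by
  set hH := Matrix.isHermitian_conjTranspose_mul_self X with hHdef
  set U : Matrix n n ℝ := (Matrix.IsHermitian.eigenvectorUnitary hH : Matrix n n ℝ) with hUdef
  have hUU : Uᴴ * U = 1 := by
    simpa [Matrix.star_eq_conjTranspose, hUdef] using Unitary.coe_star_mul_self (Matrix.IsHermitian.eigenvectorUnitary hH)
  have hUU' : U * Uᴴ = 1 := by
    simpa [Matrix.star_eq_conjTranspose, hUdef] using Unitary.coe_mul_star_self (Matrix.IsHermitian.eigenvectorUnitary hH)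
  have hdiag : Uᴴ * (Xᴴ * X) * U = Matrix.diagonal hH.eigenvalues := by
    have := hH.conjStarAlgAut_star_eigenvectorUnitary
    simpa [Matrix.star_eq_conjTranspose, Unitary.conjStarAlgAut_apply, hUdef] using this
  have hXU : ∀ i, ∑ k, (X * U) k i ^ 2 = hH.eigenvalues i := by
    intro i
    rw [← col_sq]
    rw [Matrix.conjTranspose_mul, show Uᴴ * Xᴴ * (X * U) = Uᴴ * (Xᴴ * X) * U by noncomm_ring,
      hdiag, Matrix.diagonal_apply_eq]
  have hWU : ∀ i, ∑ k, (W * U) k i ^ 2 ≤ 1 := by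
    intro i
    have hps : (1 - (W * U)ᴴ * (W * U)).PosSemidef := by
      have he : Uᴴ * (1 - Wᴴ * W) * U = 1 - (W * U)ᴴ * (W * U) := by
        have h1 : Uᴴ * (1 - Wᴴ * W) * U = Uᴴ * U - Uᴴ * (Wᴴ * W) * U := by noncomm_ring
        rw [h1, hUU, Matrix.conjTranspose_mul]
        noncomm_ring
      rw [← he]
      simpa [Matrix.star_eq_conjTranspose] using hW.conjTranspose_mul_mul_same U
    have h3 := psd_diag_nonneg hps i
    rw [Matrix.sub_apply, Matrix.one_apply_eq, col_sq] at h3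
    linarith
  have htr : (Wᴴ * X).trace = ((W * U)ᴴ * (X * U)).trace := by
    rw [Matrix.conjTranspose_mul,
      show Uᴴ * Wᴴ * (X * U) = Uᴴ * (Wᴴ * X * U) by noncomm_ring,
      Matrix.trace_mul_comm Uᴴ (Wᴴ * X * U),
      show Wᴴ * X * U * Uᴴ = Wᴴ * X * (U * Uᴴ) by noncomm_ring, hUU', Matrix.mul_one]
  rw [htr, trace_conjTranspose_mul, nuclearNorm]
  refine Finset.sum_le_sum fun i _ => ?_
  calc ∑ k, (W * U) k i * (X * U) k i
      ≤ Real.sqrt (∑ k, (W * U) k i ^ 2) * Real.sqrt (∑ k, (X * U) k i ^ 2) :=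
        Real.sum_mul_le_sqrt_mul_sqrt _ _ _
    _ ≤ 1 * Real.sqrt (hH.eigenvalues i) := by
        rw [hXU i]
        refine mul_le_mul_of_nonneg_right ?_ (Real.sqrt_nonneg _)
        calc Real.sqrt (∑ k, (W * U) k i ^ 2) ≤ Real.sqrt 1 := Real.sqrt_le_sqrt (hWU i)
          _ = 1 := Real.sqrt_one
    _ = Real.sqrt (hH.eigenvalues i) := one_mul _
end Aux

section Aux2
variable {n : Type*} [Fintype n] [DecidableEq n]

lemma exists_maximizer (X : Matrix n n ℝ) :
    ∃ W : Matrix n n ℝ, Wᴴ * W = 1 ∧ (Wᴴ * X).trace = nuclearNorm X := by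
  set hH := Matrix.isHermitian_conjTranspose_mul_self X with hHdef
  set U : Matrix n n ℝ := (Matrix.IsHermitian.eigenvectorUnitary hH : Matrix n n ℝ) with hUdef
  have hUU : Uᴴ * U = 1 := by
    simpa [Matrix.star_eq_conjTranspose, hUdef] using Unitary.coe_star_mul_self (Matrix.IsHermitian.eigenvectorUnitary hH)
  have hUU' : U * Uᴴ = 1 := by
    simpa [Matrix.star_eq_conjTranspose, hUdef] using Unitary.coe_mul_star_self (Matrix.IsHermitian.eigenvectorUnitary hH)
  have hdiag : Uᴴ * (Xᴴ * X) * U = Matrix.diagonal hH.eigenvalues := by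
    have := hH.conjStarAlgAut_star_eigenvectorUnitary
    simpa [Matrix.star_eq_conjTranspose, Unitary.conjStarAlgAut_apply, hUdef] using this
  set lam : n → ℝ := hH.eigenvalues with hlamdef
  have hlam0 : ∀ i, 0 ≤ lam i := fun i => Matrix.eigenvalues_conjTranspose_mul_self_nonneg X i
  set M : Matrix n n ℝ := X * U with hMdef
  have hM : ∀ i j, ∑ k, M k i * M k j = if i = j then lam i else 0 := by
    intro i j
    have h1 : (Mᴴ * M) i j = Matrix.diagonal lam i j := by
      rw [hMdef, Matrix.conjTranspose_mul,
        show Uᴴ * Xᴴ * (X * U) = Uᴴ * (Xᴴ * X) * U by noncomm_ring, hdiag]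
    simpa [Matrix.mul_apply, Matrix.conjTranspose_apply, Matrix.diagonal_apply] using h1
  -- the candidate left singular vectors
  set v : n → EuclideanSpace ℝ n :=
    fun i => (Real.sqrt (lam i))⁻¹ • (WithLp.equiv 2 (n → ℝ)).symm (fun k => M k i) with hvdef
  have hvinner : ∀ i j, (inner ℝ (v i) (v j) : ℝ) =
      (Real.sqrt (lam i))⁻¹ * ((Real.sqrt (lam j))⁻¹ * (if i = j then lam i else 0)) := by
    intro i j
    have hbase : (inner ℝ ((WithLp.equiv 2 (n → ℝ)).symm (fun k => M k i))
        ((WithLp.equiv 2 (n → ℝ)).symm (fun k => M k j)) : ℝ) = if i = j then lam i else 0 := by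
      rw [← hM i j]
      simp [PiLp.inner_apply, RCLike.inner_apply, starRingEnd_apply, WithLp.equiv_symm_apply, PiLp.toLp_apply]
      exact Finset.sum_congr rfl fun _ _ => mul_comm _ _
    rw [hvdef]
    simp only [real_inner_smul_left, real_inner_smul_right]
    rw [hbase]
    ring
  have hsne : ∀ i, lam i ≠ 0 → Real.sqrt (lam i) ≠ 0 := by
    intro i hi
    exact ne_of_gt (Real.sqrt_pos.mpr (lt_of_le_of_ne (hlam0 i) (Ne.symm hi)))
  have horth : Orthonormal ℝ (Set.restrict {i | lam i ≠ 0} v) := by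
    rw [orthonormal_iff_ite]
    rintro ⟨i, hi⟩ ⟨j, hj⟩
    simp only [Set.restrict_apply, Subtype.mk.injEq]
    change inner ℝ (v i) (v j) = _
    rw [hvinner i j]
    by_cases hij : i = j
    · subst hij
      rw [if_pos rfl, if_pos rfl]
      have hs := hsne i hi
      rw [show lam i = Real.sqrt (lam i) * Real.sqrt (lam i) from
        (Real.mul_self_sqrt (hlam0 i)).symm]
      field_simp
      rw [Real.sqrt_sq (Real.sqrt_nonneg _)]
    · rw [if_neg hij, if_neg hij, mul_zero, mul_zero]
  obtain ⟨b, hb⟩ := horth.exists_orthonormalBasis_extension_of_card_eq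
    (by simp [finrank_euclideanSpace])
  set N : Matrix n n ℝ := fun k i => b i k with hNdef
  have hN : Nᴴ * N = 1 := by
    ext i j
    have := orthonormal_iff_ite.mp b.orthonormal i j
    simp only [PiLp.inner_apply, RCLike.inner_apply, starRingEnd_apply, star_trivial] at this
    simp only [Matrix.mul_apply, Matrix.conjTranspose_apply, star_trivial, hNdef,
      Matrix.one_apply]
    rw [← this]
    exact Finset.sum_congr rfl fun _ _ => mul_comm _ _
  refine ⟨N * Uᴴ, ?_, ?_⟩
  · rw [Matrix.conjTranspose_mul, Matrix.conjTranspose_conjTranspose,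
      show U * Nᴴ * (N * Uᴴ) = U * (Nᴴ * N) * Uᴴ by noncomm_ring, hN, Matrix.mul_one, hUU']
  · rw [Matrix.conjTranspose_mul, Matrix.conjTranspose_conjTranspose,
      show U * Nᴴ * X = U * (Nᴴ * X) by noncomm_ring,
      Matrix.trace_mul_comm U (Nᴴ * X), Matrix.mul_assoc, ← hMdef,
      trace_conjTranspose_mul, nuclearNorm]
    refine Finset.sum_congr rfl fun i _ => ?_
    by_cases hi : lam i = 0
    · have hMz : ∀ k, M k i = 0 := by
        intro k
        have h0 : ∑ k, M k i ^ 2 = 0 := by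
          have := hM i i; rw [if_pos rfl, hi] at this
          simpa [sq] using this
        have := (Finset.sum_eq_zero_iff_of_nonneg (fun k _ => sq_nonneg (M k i))).mp h0 k
          (Finset.mem_univ k)
        exact pow_eq_zero_iff (n := 2) (by norm_num) |>.mp this
      rw [show (hH.eigenvalues i) = lam i from rfl, hi, Real.sqrt_zero]
      exact Finset.sum_eq_zero fun k _ => by rw [hMz k, mul_zero]
    · have hbv : b i = v i := hb i hi
      have hN_col : ∀ k, N k i = (Real.sqrt (lam i))⁻¹ * M k i := by
        intro k
        rw [hNdef]
        show b i k = _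
        rw [hbv, hvdef]
        simp [PiLp.smul_apply, WithLp.equiv_symm_apply, PiLp.toLp_apply]
      have hs : Real.sqrt (lam i) ≠ 0 := hsne i hi
      calc ∑ k, N k i * M k i = (Real.sqrt (lam i))⁻¹ * ∑ k, M k i * M k i := by
            rw [Finset.mul_sum]
            exact Finset.sum_congr rfl fun k _ => by rw [hN_col k]; ring
        _ = (Real.sqrt (lam i))⁻¹ * lam i := by rw [hM i i, if_pos rfl]
        _ = Real.sqrt (lam i) := by
            rw [show lam i = Real.sqrt (lam i) * Real.sqrt (lam i) from (Real.mul_self_sqrt (hlam0 i)).symm]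
            field_simp
            rw [Real.sqrt_sq (Real.sqrt_nonneg _)]
end Aux2

section Blocks

lemma trace_fromBlocks' {p q : Type*} [Fintype p] [Fintype q] (A : Matrix p p ℝ)
    (B : Matrix p q ℝ) (C : Matrix q p ℝ) (D : Matrix q q ℝ) :
    (Matrix.fromBlocks A B C D).trace = A.trace + D.trace := by
  simp [Matrix.trace, Matrix.diag, Fintype.sum_sum_type]

lemma toBlocks_one₁₁ {p q : Type*} [DecidableEq p] [DecidableEq q] :
    (1 : Matrix (p ⊕ q) (p ⊕ q) ℝ).toBlocks₁₁ = 1 := by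
  rw [← Matrix.fromBlocks_one, Matrix.toBlocks_fromBlocks₁₁]

lemma toBlocks_one₂₂ {p q : Type*} [DecidableEq p] [DecidableEq q] :
    (1 : Matrix (p ⊕ q) (p ⊕ q) ℝ).toBlocks₂₂ = 1 := by
  rw [← Matrix.fromBlocks_one, Matrix.toBlocks_fromBlocks₂₂]

lemma nuclear_blockdiag {p q : ℕ} (A : Matrix (Fin p) (Fin p) ℝ) (D : Matrix (Fin q) (Fin q) ℝ) :
    nuclearNorm (Matrix.fromBlocks A 0 0 D) = nuclearNorm A + nuclearNorm D := by
  apply le_antisymm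
  · obtain ⟨W, hW1, hW2⟩ := exists_maximizer (Matrix.fromBlocks A 0 0 D)
    rw [← hW2]
    set E := W.toBlocks₁₁ with hE
    set F := W.toBlocks₁₂ with hF
    set G := W.toBlocks₂₁ with hG
    set Hm := W.toBlocks₂₂ with hHm
    have hWb : W = Matrix.fromBlocks E F G Hm := (Matrix.fromBlocks_toBlocks W).symm
    have hmul : Matrix.fromBlocks (Eᴴ*E + Gᴴ*G) (Eᴴ*F + Gᴴ*Hm) (Fᴴ*E + Hmᴴ*G) (Fᴴ*F + Hmᴴ*Hm)
        = Matrix.fromBlocks 1 0 0 1 := by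
      rw [← Matrix.fromBlocks_multiply, ← Matrix.fromBlocks_conjTranspose, ← hWb, hW1,
        Matrix.fromBlocks_one]
    have h11 : Eᴴ*E + Gᴴ*G = 1 := by
      have := congrArg Matrix.toBlocks₁₁ hmul
      simpa [Matrix.toBlocks_fromBlocks₁₁, toBlocks_one₁₁] using this
    have h22 : Fᴴ*F + Hmᴴ*Hm = 1 := by
      have := congrArg Matrix.toBlocks₂₂ hmul
      simpa [Matrix.toBlocks_fromBlocks₂₂, toBlocks_one₂₂] using this
    have htr : (Wᴴ * Matrix.fromBlocks A 0 0 D).trace = (Eᴴ * A).trace + (Hmᴴ * D).trace := by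
      rw [hWb, Matrix.fromBlocks_conjTranspose, Matrix.fromBlocks_multiply,
        trace_fromBlocks']
      simp
    rw [htr]
    have hpsdE : (1 - Eᴴ * E).PosSemidef := by
      have : (1 : Matrix (Fin p) (Fin p) ℝ) - Eᴴ * E = Gᴴ * G := by
        rw [← h11]; abel
      rw [this]
      exact Matrix.posSemidef_conjTranspose_mul_self G
    have hpsdH : (1 - Hmᴴ * Hm).PosSemidef := by
      have : (1 : Matrix (Fin q) (Fin q) ℝ) - Hmᴴ * Hm = Fᴴ * F := by
        rw [← h22]; abel
      rw [this]
      exact Matrix.posSemidef_conjTranspose_mul_self F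
    exact add_le_add (key_ineq A E hpsdE) (key_ineq D Hm hpsdH)
  · obtain ⟨WA, hWA1, hWA2⟩ := exists_maximizer A
    obtain ⟨WD, hWD1, hWD2⟩ := exists_maximizer D
    set W := Matrix.fromBlocks WA 0 0 WD with hWdef
    have hWA1' : WAᵀ * WA = 1 := by simpa using hWA1
    have hWD1' : WDᵀ * WD = 1 := by simpa using hWD1
    have hW1 : Wᴴ * W = 1 := by
      rw [hWdef, Matrix.fromBlocks_conjTranspose, Matrix.fromBlocks_multiply]
      simp [hWA1, hWD1, hWA1', hWD1', ← Matrix.fromBlocks_one]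
    have hpsd : (1 - Wᴴ * W).PosSemidef := by
      rw [hW1, sub_self]
      exact Matrix.PosSemidef.zero
    have hkey := key_ineq (Matrix.fromBlocks A 0 0 D) W hpsd
    have htr : (Wᴴ * Matrix.fromBlocks A 0 0 D).trace = (WAᴴ * A).trace + (WDᴴ * D).trace := by
      rw [hWdef, Matrix.fromBlocks_conjTranspose, Matrix.fromBlocks_multiply,
        trace_fromBlocks']
      simp
    rw [htr, hWA2, hWD2] at hkey
    exact hkey

theorem stmt2 {p q : ℕ} (A : Matrix (Fin p) (Fin p) ℝ) (B : Matrix (Fin p) (Fin q) ℝ)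
    (C : Matrix (Fin q) (Fin p) ℝ) (D : Matrix (Fin q) (Fin q) ℝ) :
    nuclearNorm (Matrix.fromBlocks A B C D) ≥ nuclearNorm (Matrix.fromBlocks A 0 0 D) ∧
    nuclearNorm (Matrix.fromBlocks A 0 0 D) = nuclearNorm A + nuclearNorm D := by
  refine ⟨?_, nuclear_blockdiag A D⟩
  obtain ⟨WA, hWA1, hWA2⟩ := exists_maximizer A
  obtain ⟨WD, hWD1, hWD2⟩ := exists_maximizer D
  set W := Matrix.fromBlocks WA 0 0 WD with hWdef
  have hWA1' : WAᵀ * WA = 1 := by simpa using hWA1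
  have hWD1' : WDᵀ * WD = 1 := by simpa using hWD1
  have hW1 : Wᴴ * W = 1 := by
    rw [hWdef, Matrix.fromBlocks_conjTranspose, Matrix.fromBlocks_multiply]
    simp [hWA1, hWD1, hWA1', hWD1', ← Matrix.fromBlocks_one]
  have hpsd : (1 - Wᴴ * W).PosSemidef := by
    rw [hW1, sub_self]
    exact Matrix.PosSemidef.zero
  have hkey := key_ineq (Matrix.fromBlocks A B C D) W hpsd
  have htr : (Wᴴ * Matrix.fromBlocks A B C D).trace = (WAᴴ * A).trace + (WDᴴ * D).trace := by
    rw [hWdef, Matrix.fromBlocks_conjTranspose, Matrix.fromBlocks_multiply,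
      trace_fromBlocks']
    simp
  rw [htr, hWA2, hWD2] at hkey
  calc nuclearNorm (Matrix.fromBlocks A 0 0 D) = nuclearNorm A + nuclearNorm D :=
        nuclear_blockdiag A D
    _ ≤ nuclearNorm (Matrix.fromBlocks A B C D) := hkey

end Blocks
end

section
/- Let Σ_r = diag(σ₁,…,σ_r) with σᵢ > 0, and μ > 0. Among all symmetric r×r matrices W̃, any minimizer of f(W̃) = (1/μ)‖W̃‖₊ + (1/2)‖W̃ − Σ_r‖_F² must be a diagonal matrix. -/
open Matrix BigOperators

open Polynomial

set_option linter.unusedSectionVars false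
set_option linter.unusedVariables false

variable {n : Type*} [Fintype n] [DecidableEq n]

lemma charpoly_conj' {R : Type*} [CommRing R] (U V M : Matrix n n R)
    (h1 : U * V = 1) : (U * M * V).charpoly = M.charpoly := by
  have key : charmatrix (U * M * V) = U.map C * charmatrix M * V.map C := by
    unfold charmatrix
    simp only [RingHom.mapMatrix_apply]
    rw [Matrix.mul_sub, Matrix.sub_mul]
    congr 1
    · have : U.map (C : R →+* R[X]) * Matrix.scalar n (X : R[X]) * V.map C
          = Matrix.scalar n (X : R[X]) * (U.map C * V.map C) := by
        rw [← (Matrix.scalar_commute (X : R[X]) (fun r => Commute.all _ _) (U.map C)).eq,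
          Matrix.mul_assoc]
      rw [this, ← Matrix.map_mul, h1]
      simp
    · rw [← Matrix.map_mul, ← Matrix.map_mul]
  unfold Matrix.charpoly
  rw [key, Matrix.det_mul, Matrix.det_mul, mul_comm, ← mul_assoc, ← Matrix.det_mul,
    ← Matrix.map_mul]
  have h2 : V * U = 1 := by
    have := mul_eq_one_comm.mp h1
    exact this
  rw [h2]
  simp

lemma charpoly_diagonal' {R : Type*} [CommRing R] (d : n → R) :
    (Matrix.diagonal d).charpoly = ∏ i, (X - C (d i)) := by
  unfold Matrix.charpoly charmatrix
  simp only [RingHom.mapMatrix_apply]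
  rw [Matrix.diagonal_map (by simp : (C : R →+* R[X]) 0 = 0), Matrix.scalar_apply,
    Matrix.diagonal_sub, Matrix.det_diagonal]

lemma herm_charpoly (A : Matrix n n ℝ) (hA : A.IsHermitian) :
    A.charpoly = ∏ i, (X - C (hA.eigenvalues i)) := by
  have hsp := hA.spectral_theorem
  have hU : (hA.eigenvectorUnitary : Matrix n n ℝ) * star (hA.eigenvectorUnitary : Matrix n n ℝ) = 1 :=
    Matrix.mem_unitaryGroup_iff.mp hA.eigenvectorUnitary.2
  calc A.charpoly = ((hA.eigenvectorUnitary : Matrix n n ℝ) *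
        Matrix.diagonal (RCLike.ofReal ∘ hA.eigenvalues) *
        star (hA.eigenvectorUnitary : Matrix n n ℝ)).charpoly := by
          rw [Unitary.conjStarAlgAut_apply] at hsp; rw [← hsp]
    _ = (Matrix.diagonal (RCLike.ofReal ∘ hA.eigenvalues)).charpoly := charpoly_conj' _ _ _ hU
    _ = ∏ i, (X - C (hA.eigenvalues i)) := by
        rw [charpoly_diagonal']
        simp [Function.comp]

lemma sum_comp_eq_of_prod_X_sub_C (f g : n → ℝ)
    (h : ∏ i, (X - C (f i)) = ∏ i, (X - C (g i))) (F : ℝ → ℝ) :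
    ∑ i, F (f i) = ∑ i, F (g i) := by
  have key : ∀ f : n → ℝ, (∏ i, (X - C (f i))).roots = Finset.univ.val.map f := by
    intro f
    have h1 : (∏ i, (X - C (f i))) = ((Finset.univ.val.map f).map fun a => X - C a).prod := by
      rw [Multiset.map_map]; rfl
    rw [h1, Polynomial.roots_multiset_prod_X_sub_C]
  have hm : Finset.univ.val.map f = Finset.univ.val.map g := by
    rw [← key f, ← key g, h]
  have h2 : ∀ f : n → ℝ, ∑ i, F (f i) = ((Finset.univ.val.map f).map F).sum := by
    intro f; rw [Multiset.map_map]; rfl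
  rw [h2, h2, hm]

lemma nuclearNorm_eq_sum_abs (W : Matrix n n ℝ) (hH : W.IsHermitian) :
    nuclearNorm W = ∑ i, |hH.eigenvalues i| := by
  set V : Matrix n n ℝ := (hH.eigenvectorUnitary : Matrix n n ℝ) with hVdef
  have hV1 : V * star V = 1 := Matrix.mem_unitaryGroup_iff.mp hH.eigenvectorUnitary.2
  have hV2 : star V * V = 1 := Matrix.mem_unitaryGroup_iff'.mp hH.eigenvectorUnitary.2
  have hD : Matrix.diagonal (RCLike.ofReal ∘ hH.eigenvalues) = Matrix.diagonal hH.eigenvalues := by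
    congr 1
  have hsp : W = V * Matrix.diagonal hH.eigenvalues * star V := by
    rw [← hD]; exact hH.spectral_theorem
  have hG : Wᴴ * W = V * Matrix.diagonal (fun i => hH.eigenvalues i ^ 2) * star V := by
    rw [hH.eq]
    calc W * W = (V * Matrix.diagonal hH.eigenvalues * star V) *
          (V * Matrix.diagonal hH.eigenvalues * star V) := by rw [← hsp]
      _ = V * (Matrix.diagonal hH.eigenvalues * (star V * V) * Matrix.diagonal hH.eigenvalues)
            * star V := by noncomm_ring
      _ = V * Matrix.diagonal (fun i => hH.eigenvalues i ^ 2) * star V := by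
          rw [hV2, Matrix.mul_one, Matrix.diagonal_mul_diagonal]
          congr 1; ext i; ring_nf
  have hcp : (Wᴴ * W).charpoly =
      ∏ i, (X - C ((Matrix.isHermitian_conjTranspose_mul_self W).eigenvalues i)) :=
    herm_charpoly _ _
  have hcp2 : (Wᴴ * W).charpoly = ∏ i, (X - C (hH.eigenvalues i ^ 2)) := by
    rw [hG, charpoly_conj' _ _ _ hV1, charpoly_diagonal']
  have := sum_comp_eq_of_prod_X_sub_C _ _ (hcp.symm.trans hcp2) Real.sqrt
  unfold nuclearNorm
  rw [this]
  exact Finset.sum_congr rfl fun i _ => Real.sqrt_sq_eq_abs _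

lemma trace_bound (Wm : Matrix n n ℝ) (hH : Wm.IsHermitian) (V : Matrix n n ℝ)
    (hV : V * Vᵀ = 1) (s : n → ℝ) (hs : ∀ j, |s j| ≤ 1) :
    Matrix.trace (V * Matrix.diagonal s * Vᵀ * Wm) ≤ ∑ k, |hH.eigenvalues k| := by
  set U : Matrix n n ℝ := (hH.eigenvectorUnitary : Matrix n n ℝ) with hUdef
  have hstar : star U = Uᵀ := by
    rw [Matrix.star_eq_conjTranspose, Matrix.conjTranspose_eq_transpose_of_trivial]
  have hU1 : U * Uᵀ = 1 := by
    rw [← hstar]; exact Matrix.mem_unitaryGroup_iff.mp hH.eigenvectorUnitary.2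
  have hU2 : Uᵀ * U = 1 := by
    rw [← hstar]; exact Matrix.mem_unitaryGroup_iff'.mp hH.eigenvectorUnitary.2
  have hD : Matrix.diagonal (RCLike.ofReal ∘ hH.eigenvalues) = Matrix.diagonal hH.eigenvalues := by
    congr 1
  have hsp : Wm = U * Matrix.diagonal hH.eigenvalues * Uᵀ := by
    rw [← hstar, ← hD]; exact hH.spectral_theorem
  set P : Matrix n n ℝ := Vᵀ * U with hPdef
  have hPP : Pᵀ * P = 1 := by
    rw [hPdef, Matrix.transpose_mul, Matrix.transpose_transpose, Matrix.mul_assoc,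
      ← Matrix.mul_assoc V, hV, Matrix.one_mul, hU2]
  have hcol : ∀ k, ∑ j, (P j k) ^ 2 = 1 := by
    intro k
    have := congrFun (congrFun hPP k) k
    simp only [Matrix.mul_apply, Matrix.transpose_apply, Matrix.one_apply_eq] at this
    rw [← this]
    exact Finset.sum_congr rfl fun j _ => (sq (P j k)).symm ▸ rfl
  have htr : Matrix.trace (V * Matrix.diagonal s * Vᵀ * Wm)
      = ∑ k, (∑ j, s j * (P j k) ^ 2) * hH.eigenvalues k := by
    have e0 : V * Matrix.diagonal s * Vᵀ * Wm
        = V * Matrix.diagonal s * Vᵀ * (U * Matrix.diagonal hH.eigenvalues * Uᵀ) := by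
      rw [← hsp]
    rw [e0]
    have e1 : V * Matrix.diagonal s * Vᵀ * (U * Matrix.diagonal hH.eigenvalues * Uᵀ)
        = (V * Matrix.diagonal s * Vᵀ * U * Matrix.diagonal hH.eigenvalues) * Uᵀ := by
      noncomm_ring
    rw [e1, Matrix.trace_mul_comm]
    have e2 : Uᵀ * (V * Matrix.diagonal s * Vᵀ * U * Matrix.diagonal hH.eigenvalues)
        = (Pᵀ * Matrix.diagonal s * P) * Matrix.diagonal hH.eigenvalues := by
      rw [hPdef, Matrix.transpose_mul, Matrix.transpose_transpose]
      noncomm_ring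
    rw [e2]
    have tr_eq : ∀ (B : Matrix n n ℝ) (d : n → ℝ),
        Matrix.trace (B * Matrix.diagonal d) = ∑ k, B k k * d k := by
      intro B d
      simp [Matrix.trace, Matrix.mul_diagonal]
    rw [tr_eq]
    apply Finset.sum_congr rfl
    intro k _
    congr 1
    rw [Matrix.mul_apply]
    apply Finset.sum_congr rfl
    intro j _
    rw [Matrix.mul_diagonal, Matrix.transpose_apply]
    ring
  rw [htr]
  apply Finset.sum_le_sum
  intro k _
  have hb : |∑ j, s j * (P j k) ^ 2| ≤ 1 := by
    calc |∑ j, s j * (P j k) ^ 2| ≤ ∑ j, |s j * (P j k) ^ 2| := Finset.abs_sum_le_sum_abs _ _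
      _ ≤ ∑ j, (P j k) ^ 2 := by
          apply Finset.sum_le_sum
          intro j _
          rw [abs_mul, abs_pow, sq_abs]
          exact mul_le_of_le_one_left (by positivity) (hs j)
      _ = 1 := hcol k
  calc (∑ j, s j * (P j k) ^ 2) * hH.eigenvalues k
      ≤ |(∑ j, s j * (P j k) ^ 2) * hH.eigenvalues k| := le_abs_self _
    _ = |∑ j, s j * (P j k) ^ 2| * |hH.eigenvalues k| := abs_mul _ _
    _ ≤ 1 * |hH.eigenvalues k| := by
        exact mul_le_mul_of_nonneg_right hb (abs_nonneg _)
    _ = |hH.eigenvalues k| := one_mul _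

lemma nuclearNorm_pinch (W : Matrix n n ℝ) (hW : Wᵀ = W) (s : n → ℝ)
    (hs : ∀ j, s j = 1 ∨ s j = -1) :
    nuclearNorm ((1/2 : ℝ) • (W + Matrix.diagonal s * W * Matrix.diagonal s)) ≤ nuclearNorm W := by
  have hs1 : ∀ j, |s j| ≤ 1 := fun j => by rcases hs j with h | h <;> simp [h]
  have hH : W.IsHermitian := by
    rw [Matrix.IsHermitian, Matrix.conjTranspose_eq_transpose_of_trivial, hW]
  set S : Matrix n n ℝ := Matrix.diagonal s with hSdef
  have hSS : S * S = 1 := by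
    rw [hSdef, Matrix.diagonal_mul_diagonal]
    have hfun : (fun i => s i * s i) = fun _ => (1 : ℝ) :=
      funext fun i => by rcases hs i with h | h <;> rw [h] <;> norm_num
    rw [hfun, Matrix.diagonal_one]
  have hST : Sᵀ = S := Matrix.diagonal_transpose s
  set W' : Matrix n n ℝ := (1/2 : ℝ) • (W + S * W * S) with hW'def
  have hW'T : W'ᵀ = W' := by
    rw [hW'def, Matrix.transpose_smul, Matrix.transpose_add, Matrix.transpose_mul,
      Matrix.transpose_mul, hST, hW, Matrix.mul_assoc]
  have hH' : W'.IsHermitian := by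
    rw [Matrix.IsHermitian, Matrix.conjTranspose_eq_transpose_of_trivial, hW'T]
  set V : Matrix n n ℝ := (hH'.eigenvectorUnitary : Matrix n n ℝ) with hVdef
  have hstar : star V = Vᵀ := by
    rw [Matrix.star_eq_conjTranspose, Matrix.conjTranspose_eq_transpose_of_trivial]
  have hV1 : V * Vᵀ = 1 := by
    rw [← hstar]; exact Matrix.mem_unitaryGroup_iff.mp hH'.eigenvectorUnitary.2
  have hV2 : Vᵀ * V = 1 := by
    rw [← hstar]; exact Matrix.mem_unitaryGroup_iff'.mp hH'.eigenvectorUnitary.2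
  have hD : Matrix.diagonal (RCLike.ofReal ∘ hH'.eigenvalues) = Matrix.diagonal hH'.eigenvalues := by
    congr 1
  have hsp : W' = V * Matrix.diagonal hH'.eigenvalues * Vᵀ := by
    rw [← hstar, ← hD]; exact hH'.spectral_theorem
  set q : n → ℝ := fun k => if hH'.eigenvalues k < 0 then -1 else 1 with hqdef
  have hq1 : ∀ k, |q k| ≤ 1 := fun k => by
    rw [hqdef]; dsimp only; split <;> simp
  set Q : Matrix n n ℝ := V * Matrix.diagonal q * Vᵀ with hQdef
  -- trace (Q * W') = ∑ |eigenvalues|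
  have htrQW' : Matrix.trace (Q * W') = ∑ k, |hH'.eigenvalues k| := by
    have e1 : Q * W' = V * Matrix.diagonal (fun k => q k * hH'.eigenvalues k) * Vᵀ := by
      rw [hQdef]
      conv_lhs => rw [hsp]
      rw [← Matrix.diagonal_mul_diagonal]
      calc V * Matrix.diagonal q * Vᵀ * (V * Matrix.diagonal hH'.eigenvalues * Vᵀ)
          = V * (Matrix.diagonal q * (Vᵀ * V) * Matrix.diagonal hH'.eigenvalues) * Vᵀ := by
            noncomm_ring
        _ = V * (Matrix.diagonal q * Matrix.diagonal hH'.eigenvalues) * Vᵀ := by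
            rw [hV2, Matrix.mul_one]
    rw [e1, Matrix.trace_mul_comm, ← Matrix.mul_assoc, hV2, Matrix.one_mul,
      Matrix.trace_diagonal]
    apply Finset.sum_congr rfl
    intro k _
    rw [hqdef]
    dsimp only
    rcases lt_or_ge (hH'.eigenvalues k) 0 with h | h
    · rw [if_pos h, abs_of_neg h]; ring
    · rw [if_neg (not_lt.mpr h), abs_of_nonneg h]; ring
  -- trace (Q * W') as average
  have htr_avg : Matrix.trace (Q * W')
      = (1/2 : ℝ) * (Matrix.trace (Q * W) + Matrix.trace ((S * Q * S) * W)) := by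
    have e2 : Q * W' = (1/2 : ℝ) • (Q * W + Q * (S * W * S)) := by
      rw [hW'def, Matrix.mul_smul, Matrix.mul_add]
    rw [e2, Matrix.trace_smul, Matrix.trace_add]
    have e3 : Matrix.trace (Q * (S * W * S)) = Matrix.trace ((S * Q * S) * W) := by
      calc Matrix.trace (Q * (S * W * S)) = Matrix.trace ((Q * S * W) * S) :=
            congrArg Matrix.trace (by noncomm_ring)
        _ = Matrix.trace (S * (Q * S * W)) := (Matrix.trace_mul_comm _ _).symm
        _ = Matrix.trace ((S * Q * S) * W) := by noncomm_ring
    rw [e3, smul_eq_mul]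
  -- both traces bounded by nuclearNorm W
  have hb1 : Matrix.trace (Q * W) ≤ ∑ k, |hH.eigenvalues k| := trace_bound W hH V hV1 q hq1
  have hb2 : Matrix.trace ((S * Q * S) * W) ≤ ∑ k, |hH.eigenvalues k| := by
    have e4 : S * Q * S = (S * V) * Matrix.diagonal q * (S * V)ᵀ := by
      rw [Matrix.transpose_mul, hST, hQdef]
      noncomm_ring
    have e5 : (S * V) * (S * V)ᵀ = 1 := by
      rw [Matrix.transpose_mul, hST]
      calc S * V * (Vᵀ * S) = S * (V * Vᵀ) * S := by noncomm_ring
        _ = 1 := by rw [hV1, Matrix.mul_one, hSS]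
    rw [e4]
    exact trace_bound W hH (S * V) e5 q hq1
  rw [nuclearNorm_eq_sum_abs W' hH', nuclearNorm_eq_sum_abs W hH, ← htrQW', htr_avg]
  linarith

theorem stmt10 {r : ℕ} (σ : Fin r → ℝ) (hσ : ∀ i, 0 < σ i) (μ : ℝ) (hμ : 0 < μ)
    (W : Matrix (Fin r) (Fin r) ℝ) (hWsym : Wᵀ = W)
    (hmin : ∀ W' : Matrix (Fin r) (Fin r) ℝ, W'ᵀ = W' →
      (1 / μ) * nuclearNorm W + (1 / 2) * frobSq (W - Matrix.diagonal σ) ≤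
        (1 / μ) * nuclearNorm W' + (1 / 2) * frobSq (W' - Matrix.diagonal σ)) :
    ∀ i j, i ≠ j → W i j = 0 := by
  intro i j hij
  by_contra hne
  set s : Fin r → ℝ := fun a => if a = j then -1 else 1 with hsdef
  have hs : ∀ a, s a = 1 ∨ s a = -1 := fun a => by
    rw [hsdef]; dsimp only; split
    · right; rfl
    · left; rfl
  set S : Matrix (Fin r) (Fin r) ℝ := Matrix.diagonal s with hSdef
  have hST : Sᵀ = S := Matrix.diagonal_transpose s
  set W' : Matrix (Fin r) (Fin r) ℝ := (1/2 : ℝ) • (W + S * W * S) with hW'def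
  have hW'T : W'ᵀ = W' := by
    rw [hW'def, Matrix.transpose_smul, Matrix.transpose_add, Matrix.transpose_mul,
      Matrix.transpose_mul, hST, hWsym, Matrix.mul_assoc]
  have hN : nuclearNorm W' ≤ nuclearNorm W := nuclearNorm_pinch W hWsym s hs
  have hentry : ∀ a b, W' a b = (1/2) * (W a b + s a * W a b * s b) := by
    intro a b
    rw [hW'def, hSdef]
    simp only [Matrix.smul_apply, Matrix.add_apply, smul_eq_mul]
    rw [Matrix.mul_diagonal, Matrix.diagonal_mul]
  have heq : ∀ a b, (a = j ↔ b = j) → W' a b = W a b := by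
    intro a b hab
    rw [hentry, hsdef]; dsimp only
    by_cases h : a = j
    · rw [if_pos h, if_pos (hab.mp h)]; ring
    · rw [if_neg h, if_neg (fun hb => h (hab.mpr hb))]; ring
  have hzero : ∀ a b, ¬(a = j ↔ b = j) → W' a b = 0 := by
    intro a b hab
    rw [hentry, hsdef]; dsimp only
    by_cases h : a = j
    · rw [if_pos h, if_neg (fun hb => hab (iff_of_true h hb))]; ring
    · have hb : b = j := by
        by_contra hb
        exact hab (iff_of_false h hb)
      rw [if_neg h, if_pos hb]; ring
  have hterm : ∀ a b, ((W' - Matrix.diagonal σ) a b) ^ 2 ≤ ((W - Matrix.diagonal σ) a b) ^ 2 := by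
    intro a b
    by_cases h : (a = j ↔ b = j)
    · rw [Matrix.sub_apply, Matrix.sub_apply, heq a b h]
    · have hab : a ≠ b := fun he => h (by rw [he])
      rw [Matrix.sub_apply, Matrix.sub_apply, hzero a b h, Matrix.diagonal_apply_ne _ hab]
      simpa using sq_nonneg (W a b - 0)
  have hstrict : ((W' - Matrix.diagonal σ) i j) ^ 2 < ((W - Matrix.diagonal σ) i j) ^ 2 := by
    have h : ¬(i = j ↔ j = j) := fun h => hij (h.mpr rfl)
    rw [Matrix.sub_apply, Matrix.sub_apply, hzero i j h, Matrix.diagonal_apply_ne _ hij]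
    have h2 : 0 < (W i j) ^ 2 := by
      have := sq_abs (W i j)
      nlinarith [abs_pos.mpr hne, sq_abs (W i j)]
    simpa using h2
  have hF : frobSq (W' - Matrix.diagonal σ) < frobSq (W - Matrix.diagonal σ) := by
    unfold frobSq
    apply Finset.sum_lt_sum (fun a _ => Finset.sum_le_sum fun b _ => hterm a b)
    exact ⟨i, Finset.mem_univ i,
      Finset.sum_lt_sum (fun b _ => hterm i b) ⟨j, Finset.mem_univ j, hstrict⟩⟩
  have hmin' := hmin W' hW'T
  have h1 : (1/μ) * nuclearNorm W' ≤ (1/μ) * nuclearNorm W :=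
    mul_le_mul_of_nonneg_left hN (by positivity)
  linarith
end

section
/- Let Q̃ ∈ ℝ^{n×n} be symmetric with SVD Q̃ = UΣVᵀ, and μ > 0. Then W* = U_r(Σ_r − (1/μ)I_r)V_rᵀ, where Σ_r retains the singular values exceeding 1/μ and U_r, V_r the corresponding singular vectors, is the unique minimizer of (1/μ)‖W‖₊ + (1/2)‖W − Q̃‖_F² over all symmetric matrices W, and moreover W* is symmetric. -/
open Matrix BigOperators

namespace Stmt12Aux

open Polynomial


variable {n : ℕ}

lemma orth_comm {P : Matrix (Fin n) (Fin n) ℝ} (h : Pᵀ * P = 1) : P * Pᵀ = 1 :=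
  mul_eq_one_comm.mp h

lemma charpoly_conj (P M : Matrix (Fin n) (Fin n) ℝ) (hP : Pᵀ * P = 1) :
    (P * M * Pᵀ).charpoly = M.charpoly := by
  classical
  set f := (Polynomial.C : ℝ →+* ℝ[X]) with hf
  have h1 : f.mapMatrix Pᵀ * f.mapMatrix P = 1 := by
    rw [← _root_.map_mul, hP, _root_.map_one]
  have h2 : f.mapMatrix P * f.mapMatrix Pᵀ = 1 := mul_eq_one_comm.mp h1
  have hscal : Matrix.scalar (Fin n) (X : ℝ[X]) =
      f.mapMatrix P * Matrix.scalar (Fin n) (X : ℝ[X]) * f.mapMatrix Pᵀ := by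
    have hc : f.mapMatrix P * Matrix.scalar (Fin n) (X : ℝ[X]) =
        Matrix.scalar (Fin n) (X : ℝ[X]) * f.mapMatrix P :=
      (Matrix.scalar_commute (X : ℝ[X]) (fun r => Commute.all _ r) (f.mapMatrix P)).symm
    rw [hc, Matrix.mul_assoc, h2, Matrix.mul_one]
  have hch : charmatrix (P * M * Pᵀ) =
      f.mapMatrix P * charmatrix M * f.mapMatrix Pᵀ := by
    rw [charmatrix, charmatrix, _root_.map_mul, _root_.map_mul]
    rw [Matrix.mul_sub, Matrix.sub_mul, ← hscal]
  rw [Matrix.charpoly, Matrix.charpoly, hch, Matrix.det_mul, Matrix.det_mul]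
  have hdet : (f.mapMatrix P).det * (f.mapMatrix Pᵀ).det = 1 := by
    rw [← Matrix.det_mul, h2, Matrix.det_one]
  calc (f.mapMatrix P).det * (charmatrix M).det * (f.mapMatrix Pᵀ).det
      = (charmatrix M).det * ((f.mapMatrix P).det * (f.mapMatrix Pᵀ).det) := by ring
    _ = (charmatrix M).det := by rw [hdet, mul_one]

lemma charpoly_diag (d : Fin n → ℝ) :
    (Matrix.diagonal d).charpoly = ∏ i, (X - C (d i)) := by
  classical
  have : charmatrix (Matrix.diagonal d) = Matrix.diagonal (fun i => (X : ℝ[X]) - C (d i)) := by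
    ext i j
    by_cases h : i = j
    · subst h; simp [charmatrix_apply, Matrix.diagonal_apply_eq]
    · simp [charmatrix_apply, Matrix.diagonal_apply_ne _ h, h]
  rw [Matrix.charpoly, this, Matrix.det_diagonal]



variable {n : ℕ}

/-- Real spectral theorem, transpose form. -/
lemma real_spectral (B : Matrix (Fin n) (Fin n) ℝ) (hB : B.IsHermitian) :
    ∃ P : Matrix (Fin n) (Fin n) ℝ, Pᵀ * P = 1 ∧
      B = P * Matrix.diagonal hB.eigenvalues * Pᵀ := by
  refine ⟨(hB.eigenvectorUnitary : Matrix (Fin n) (Fin n) ℝ), ?_, ?_⟩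
  · have h := (Matrix.mem_unitaryGroup_iff'.mp (hB.eigenvectorUnitary).2)
    rwa [Matrix.star_eq_conjTranspose, Matrix.conjTranspose_eq_transpose_of_trivial] at h
  · have h := hB.spectral_theorem
    rwa [Unitary.conjStarAlgAut_apply, Matrix.star_eq_conjTranspose, Matrix.conjTranspose_eq_transpose_of_trivial,
      show (RCLike.ofReal ∘ hB.eigenvalues : Fin n → ℝ) = hB.eigenvalues from rfl] at h




lemma prod_X_sub_C_eq {n : ℕ} (a : Fin n → ℝ) :
    (∏ i, (X - C (a i))) = ((Finset.univ.val.map a).map (fun r => X - C r)).prod := by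
  rw [Multiset.map_map]
  rfl

lemma eig_sum_conj {n : ℕ} {B : Matrix (Fin n) (Fin n) ℝ} (hB : B.IsHermitian)
    (P : Matrix (Fin n) (Fin n) ℝ) (e : Fin n → ℝ) (hP : Pᵀ * P = 1)
    (h : B = P * Matrix.diagonal e * Pᵀ) (g : ℝ → ℝ) :
    ∑ i, g (hB.eigenvalues i) = ∑ i, g (e i) := by
  obtain ⟨Q, hQ, hBQ⟩ := real_spectral B hB
  have h1 : B.charpoly = ∏ i, (X - C (hB.eigenvalues i)) := by
    conv_lhs => rw [hBQ]
    rw [charpoly_conj _ _ hQ, charpoly_diag]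
  have h2 : B.charpoly = ∏ i, (X - C (e i)) := by
    rw [h, charpoly_conj _ _ hP, charpoly_diag]
  have hmult : (Finset.univ.val.map hB.eigenvalues) = (Finset.univ.val.map e) := by
    have := congrArg Polynomial.roots (h1.symm.trans h2)
    rwa [prod_X_sub_C_eq, prod_X_sub_C_eq, Polynomial.roots_multiset_prod_X_sub_C,
      Polynomial.roots_multiset_prod_X_sub_C] at this
  have hs : ∀ (a : Fin n → ℝ), ∑ i, g (a i) = ((Finset.univ.val.map a).map g).sum := by
    intro a
    rw [Multiset.map_map]
    rfl
  rw [hs, hs, hmult]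


lemma conj_pow (P A : Matrix (Fin n) (Fin n) ℝ) (hP : Pᵀ * P = 1) (k : ℕ) :
    (P * A * Pᵀ) ^ k = P * A ^ k * Pᵀ := by
  induction k with
  | zero => simp [orth_comm hP]
  | succ k ih =>
      rw [pow_succ, pow_succ, ih]
      calc P * A ^ k * Pᵀ * (P * A * Pᵀ)
          = P * A ^ k * (Pᵀ * P) * A * Pᵀ := by
            simp only [Matrix.mul_assoc]
        _ = P * (A ^ k * A) * Pᵀ := by rw [hP]; simp only [Matrix.mul_assoc, Matrix.mul_one]
        _ = P * (A ^ k * A) * Pᵀ := rfl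

lemma aeval_conj (P A : Matrix (Fin n) (Fin n) ℝ) (hP : Pᵀ * P = 1) (p : ℝ[X]) :
    Polynomial.aeval (P * A * Pᵀ) p = P * (Polynomial.aeval A p) * Pᵀ := by
  induction p using Polynomial.induction_on' with
  | add p q hp hq => rw [map_add, map_add, hp, hq, Matrix.mul_add, Matrix.add_mul]
  | monomial k a =>
      rw [Polynomial.aeval_monomial, Polynomial.aeval_monomial, conj_pow P A hP]
      have hcomm : algebraMap ℝ (Matrix (Fin n) (Fin n) ℝ) a * P = P * algebraMap ℝ _ a :=
        Algebra.commutes a P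
      calc algebraMap ℝ _ a * (P * A ^ k * Pᵀ)
          = algebraMap ℝ _ a * P * A ^ k * Pᵀ := by simp only [Matrix.mul_assoc]
        _ = P * (algebraMap ℝ _ a * A ^ k) * Pᵀ := by rw [hcomm]; simp only [Matrix.mul_assoc]

lemma aeval_diagonal (d : Fin n → ℝ) (p : ℝ[X]) :
    Polynomial.aeval (Matrix.diagonal d) p = Matrix.diagonal (fun i => p.eval (d i)) := by
  induction p using Polynomial.induction_on' with
  | add p q hp hq =>
      rw [map_add, hp, hq, Matrix.diagonal_add]
      congr 1
      funext i
      simp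
  | monomial k a =>
      rw [Polynomial.aeval_monomial, Matrix.diagonal_pow]
      have : algebraMap ℝ (Matrix (Fin n) (Fin n) ℝ) a = Matrix.diagonal (fun _ => a) := by
        rw [Matrix.algebraMap_eq_diagonal]
        rfl
      rw [this, Matrix.diagonal_mul_diagonal]
      congr 1
      funext i
      simp [Polynomial.eval_monomial]

lemma commute_aeval (A : Matrix (Fin n) (Fin n) ℝ) (p : ℝ[X]) :
    A * Polynomial.aeval (A * A) p = Polynomial.aeval (A * A) p * A := by
  induction p using Polynomial.induction_on' with
  | add p q hp hq => rw [map_add, Matrix.mul_add, Matrix.add_mul, hp, hq]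
  | monomial k a =>
      rw [Polynomial.aeval_monomial]
      have h1 : A * (A * A) ^ k = (A * A) ^ k * A := by
        induction k with
        | zero => simp
        | succ k ih =>
            rw [pow_succ, ← Matrix.mul_assoc, ih]
            simp only [Matrix.mul_assoc]
      calc A * (algebraMap ℝ _ a * (A * A) ^ k)
          = algebraMap ℝ _ a * (A * (A * A) ^ k) := by
            rw [← Matrix.mul_assoc, (Algebra.commutes a A).symm, Matrix.mul_assoc]
        _ = algebraMap ℝ _ a * (A * A) ^ k * A := by rw [h1, Matrix.mul_assoc]

lemma sum_swap4 (f : Fin n → Fin n → Fin n → Fin n → ℝ) :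
    ∑ a, ∑ b, ∑ i, ∑ j, f a b i j = ∑ i, ∑ j, ∑ a, ∑ b, f a b i j :=
  calc ∑ a, ∑ b, ∑ i, ∑ j, f a b i j
      = ∑ a, ∑ i, ∑ b, ∑ j, f a b i j :=
        Finset.sum_congr rfl (fun a _ => Finset.sum_comm)
    _ = ∑ i, ∑ a, ∑ b, ∑ j, f a b i j := Finset.sum_comm
    _ = ∑ i, ∑ a, ∑ j, ∑ b, f a b i j :=
        Finset.sum_congr rfl (fun i _ => Finset.sum_congr rfl (fun a _ => Finset.sum_comm))
    _ = ∑ i, ∑ j, ∑ a, ∑ b, f a b i j :=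
        Finset.sum_congr rfl (fun i _ => Finset.sum_comm)

lemma entry_UDV (U V : Matrix (Fin n) (Fin n) ℝ) (c : Fin n → ℝ) (a b : Fin n) :
    (U * Matrix.diagonal c * Vᵀ) a b = ∑ i, U a i * c i * V b i := by
  rw [Matrix.mul_apply]
  refine Finset.sum_congr rfl fun i _ => ?_
  rw [Matrix.mul_diagonal, Matrix.transpose_apply]

lemma inner_UDV (U V P Q : Matrix (Fin n) (Fin n) ℝ) (c e : Fin n → ℝ) :
    ∑ a, ∑ b, (U * Matrix.diagonal c * Vᵀ) a b * (P * Matrix.diagonal e * Qᵀ) a b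
      = ∑ i, ∑ j, c i * e j * ((Uᵀ * P) i j) * ((Vᵀ * Q) i j) := by
  have L : ∀ a b : Fin n, (U * Matrix.diagonal c * Vᵀ) a b * (P * Matrix.diagonal e * Qᵀ) a b
      = ∑ i, ∑ j, (U a i * c i * V b i) * (P a j * e j * Q b j) := by
    intro a b
    rw [entry_UDV, entry_UDV, Finset.sum_mul_sum]
  have R : ∀ i j : Fin n, c i * e j * ((Uᵀ * P) i j) * ((Vᵀ * Q) i j)
      = ∑ a, ∑ b, (U a i * c i * V b i) * (P a j * e j * Q b j) := by
    intro i j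
    rw [Matrix.mul_apply, Matrix.mul_apply]
    simp only [Matrix.transpose_apply, Finset.mul_sum, Finset.sum_mul]
    rw [Finset.sum_comm]
    refine Finset.sum_congr rfl fun a _ => ?_
    refine Finset.sum_congr rfl fun b _ => ?_
    ring
  simp only [L, R]
  exact sum_swap4 _

lemma gram (U V : Matrix (Fin n) (Fin n) ℝ) (c : Fin n → ℝ) (hU : Uᵀ * U = 1) :
    (U * Matrix.diagonal c * Vᵀ)ᵀ * (U * Matrix.diagonal c * Vᵀ)
      = V * Matrix.diagonal (fun i => c i ^ 2) * Vᵀ := by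
  rw [Matrix.transpose_mul, Matrix.transpose_mul, Matrix.transpose_transpose,
    Matrix.diagonal_transpose]
  calc V * (Matrix.diagonal c * Uᵀ) * (U * Matrix.diagonal c * Vᵀ)
      = V * Matrix.diagonal c * (Uᵀ * U) * Matrix.diagonal c * Vᵀ := by
        simp only [Matrix.mul_assoc]
    _ = V * (Matrix.diagonal c * Matrix.diagonal c) * Vᵀ := by
        rw [hU]; simp only [Matrix.mul_assoc, Matrix.mul_one]
    _ = V * Matrix.diagonal (fun i => c i ^ 2) * Vᵀ := by
        rw [Matrix.diagonal_mul_diagonal]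
        congr 1
        · congr 1
          funext i
          ring

lemma frobSq_nonneg (X : Matrix (Fin n) (Fin n) ℝ) : 0 ≤ frobSq X :=
  Finset.sum_nonneg fun _ _ => Finset.sum_nonneg fun _ _ => sq_nonneg _

lemma frobSq_pos {X : Matrix (Fin n) (Fin n) ℝ} (h : X ≠ 0) : 0 < frobSq X := by
  obtain ⟨a, b, hab⟩ : ∃ a b, X a b ≠ 0 := by
    by_contra hc
    push_neg at hc
    exact h (by ext a b; simpa using hc a b)
  refine Finset.sum_pos' (fun i _ => Finset.sum_nonneg fun j _ => sq_nonneg _)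
    ⟨a, Finset.mem_univ a, ?_⟩
  refine Finset.sum_pos' (fun j _ => sq_nonneg _) ⟨b, Finset.mem_univ b, ?_⟩
  positivity

end Stmt12Aux

theorem stmt12 {n : ℕ} (Qt : Matrix (Fin n) (Fin n) ℝ) (hQt : Qtᵀ = Qt)
    (μ : ℝ) (hμ : 0 < μ)
    (U V : Matrix (Fin n) (Fin n) ℝ) (σ : Fin n → ℝ)
    (hU : Uᵀ * U = 1) (hV : Vᵀ * V = 1) (hσ : ∀ i, 0 ≤ σ i)
    (hSVD : Qt = U * Matrix.diagonal σ * Vᵀ)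
    (Wstar : Matrix (Fin n) (Fin n) ℝ)
    (hWstar : Wstar = U * Matrix.diagonal (fun i => max (σ i - 1 / μ) 0) * Vᵀ) :
    Wstarᵀ = Wstar ∧
      ∀ W : Matrix (Fin n) (Fin n) ℝ, Wᵀ = W → W ≠ Wstar →
        (1 / μ) * nuclearNorm Wstar + (1 / 2) * frobSq (Wstar - Qt) <
          (1 / μ) * nuclearNorm W + (1 / 2) * frobSq (W - Qt) := by
  classical
  have hU' : U * Uᵀ = 1 := Stmt12Aux.orth_comm hU
  have hV' : V * Vᵀ = 1 := Stmt12Aux.orth_comm hV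
  have hμ' : (0:ℝ) < 1 / μ := by positivity
  set fσ : Fin n → ℝ := fun i => max (σ i - 1 / μ) 0 with hfσdef
  set mm : Fin n → ℝ := fun i => min (σ i) (1 / μ) with hmmdef
  have hf_nonneg : ∀ i, 0 ≤ fσ i := fun i => le_max_right _ _
  have hm_nonneg : ∀ i, 0 ≤ mm i := fun i => le_min (hσ i) hμ'.le
  have hm_le : ∀ i, mm i ≤ 1 / μ := fun i => min_le_right _ _
  have hsum : ∀ i, σ i = fσ i + mm i := by
    intro i
    rcases le_total (σ i) (1 / μ) with h | h
    · simp only [hfσdef, hmmdef]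
      rw [max_eq_right (by linarith), min_eq_left h]
      ring
    · simp only [hfσdef, hmmdef]
      rw [max_eq_left (by linarith), min_eq_right h]
      ring
  have hmf : ∀ i, mm i * fσ i = (1 / μ) * fσ i := by
    intro i
    rcases le_total (σ i) (1 / μ) with h | h
    · simp only [hfσdef, hmmdef]
      rw [max_eq_right (by linarith)]
      ring
    · simp only [hfσdef, hmmdef]
      rw [min_eq_right h]
  -- the interpolating polynomial
  set s : Finset ℝ := Finset.image (fun i => σ i ^ 2) Finset.univ with hsdef
  set r : ℝ → ℝ := fun x => if x = 0 then 0 else max (Real.sqrt x - 1 / μ) 0 / Real.sqrt x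
    with hrdef
  set p : Polynomial ℝ := Lagrange.interpolate s id r with hpdef
  have hpeval : ∀ x ∈ s, Polynomial.eval x p = r x := by
    intro x hx
    have := Lagrange.eval_interpolate_at_node r (Set.injOn_id _) hx
    rw [hpdef]
    simpa using this
  have hps : ∀ i : Fin n, σ i * Polynomial.eval (σ i ^ 2) p = fσ i := by
    intro i
    have hmem : σ i ^ 2 ∈ s := Finset.mem_image_of_mem _ (Finset.mem_univ i)
    rw [hpeval _ hmem]
    by_cases h0 : σ i = 0
    · simp only [hrdef, h0]
      norm_num
      simp only [hfσdef]
      rw [max_eq_right (by linarith)]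
    · have hσi : 0 < σ i := lt_of_le_of_ne (hσ i) (Ne.symm h0)
      have hsq : (σ i ^ 2 : ℝ) ≠ 0 := by positivity
      simp only [hrdef, hsq, if_false]
      rw [Real.sqrt_sq (hσ i), mul_comm, div_mul_cancel₀ _ h0]
  -- diagonal factorization
  have hdiagf : Matrix.diagonal fσ
      = Matrix.diagonal σ * Matrix.diagonal (fun i => Polynomial.eval (σ i ^ 2) p) := by
    rw [Matrix.diagonal_mul_diagonal]
    exact congrArg Matrix.diagonal (funext fun i => (hps i).symm)
  have hQ2 : Qt * Qt = V * Matrix.diagonal (fun i => σ i ^ 2) * Vᵀ := by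
    nth_rewrite 1 [← hQt]
    rw [hSVD]
    exact Stmt12Aux.gram U V σ hU
  have haev : Polynomial.aeval (Qt * Qt) p
      = V * Matrix.diagonal (fun i => Polynomial.eval (σ i ^ 2) p) * Vᵀ := by
    rw [hQ2, Stmt12Aux.aeval_conj V _ hV, Stmt12Aux.aeval_diagonal]
  have key1 : Wstar = Qt * Polynomial.aeval (Qt * Qt) p := by
    rw [haev, hSVD, hWstar]
    calc U * Matrix.diagonal fσ * Vᵀ
        = U * (Matrix.diagonal σ * Matrix.diagonal (fun i => Polynomial.eval (σ i ^ 2) p)) * Vᵀ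
          := by rw [← hdiagf]
      _ = U * Matrix.diagonal σ * (Vᵀ * V) * Matrix.diagonal (fun i => Polynomial.eval (σ i ^ 2) p) * Vᵀ := by
          rw [hV]; simp only [Matrix.mul_assoc, Matrix.one_mul]
      _ = U * Matrix.diagonal σ * Vᵀ * (V * Matrix.diagonal (fun i => Polynomial.eval (σ i ^ 2) p) * Vᵀ) := by
          simp only [Matrix.mul_assoc]
  have hAsymm : (Polynomial.aeval (Qt * Qt) p)ᵀ = Polynomial.aeval (Qt * Qt) p := by
    rw [haev, Matrix.transpose_mul, Matrix.transpose_mul, Matrix.transpose_transpose,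
      Matrix.diagonal_transpose, Matrix.mul_assoc]
  have hsymm : Wstarᵀ = Wstar := by
    rw [key1, Matrix.transpose_mul, hQt, hAsymm]
    exact (Stmt12Aux.commute_aeval Qt p).symm
  refine ⟨hsymm, ?_⟩
  intro W hWsym hWne
  -- difference matrix
  have hG : Qt - Wstar = U * Matrix.diagonal mm * Vᵀ := by
    rw [hSVD, hWstar, ← Matrix.sub_mul, ← Matrix.mul_sub, Matrix.diagonal_sub]
    have hd : (fun i => σ i - fσ i) = mm := funext fun i => by have := hsum i; linarith
    rw [hd]
  have hWH : W.IsHermitian := by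
    show Wᴴ = W
    rw [Matrix.conjTranspose_eq_transpose_of_trivial]
    exact hWsym
  obtain ⟨Pm, hPm, hWspec⟩ := Stmt12Aux.real_spectral W hWH
  set lam : Fin n → ℝ := hWH.eigenvalues with hlamdef
  set A : Matrix (Fin n) (Fin n) ℝ := Uᵀ * Pm with hAdef
  set B : Matrix (Fin n) (Fin n) ℝ := Vᵀ * Pm with hBdef
  have hPm' : Pm * Pmᵀ = 1 := Stmt12Aux.orth_comm hPm
  -- nuclear norms
  have hNW : nuclearNorm W = ∑ j, |lam j| := by
    have hWW : Wᴴ * W = Pm * Matrix.diagonal (fun i => lam i ^ 2) * Pmᵀ := by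
      rw [Matrix.conjTranspose_eq_transpose_of_trivial, hWspec]
      exact Stmt12Aux.gram Pm Pm lam hPm
    have h := Stmt12Aux.eig_sum_conj (Matrix.isHermitian_conjTranspose_mul_self W) Pm
      (fun i => lam i ^ 2) hPm hWW Real.sqrt
    calc nuclearNorm W = ∑ i, Real.sqrt (lam i ^ 2) := h
      _ = ∑ j, |lam j| := Finset.sum_congr rfl fun j _ => Real.sqrt_sq_eq_abs _
  have hNWstar : nuclearNorm Wstar = ∑ i, fσ i := by
    have hWW : Wstarᴴ * Wstar = V * Matrix.diagonal (fun i => fσ i ^ 2) * Vᵀ := by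
      rw [Matrix.conjTranspose_eq_transpose_of_trivial, hWstar]
      exact Stmt12Aux.gram U V fσ hU
    have h := Stmt12Aux.eig_sum_conj (Matrix.isHermitian_conjTranspose_mul_self Wstar) V
      (fun i => fσ i ^ 2) hV hWW Real.sqrt
    calc nuclearNorm Wstar = ∑ i, Real.sqrt (fσ i ^ 2) := h
      _ = ∑ i, fσ i := Finset.sum_congr rfl fun i _ => Real.sqrt_sq (hf_nonneg i)
  -- inner products
  have I1 : ∑ a, ∑ b, (Qt - Wstar) a b * W a b
      = ∑ i, ∑ j, mm i * lam j * A i j * B i j := by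
    rw [hG, hWspec]
    exact Stmt12Aux.inner_UDV U V Pm Pm mm lam
  have I2 : ∑ a, ∑ b, (Qt - Wstar) a b * Wstar a b = ∑ i, 1 / μ * fσ i := by
    rw [hG, hWstar, Stmt12Aux.inner_UDV U V U V mm fσ, hU, hV]
    refine Finset.sum_congr rfl fun i _ => ?_
    rw [Finset.sum_eq_single i]
    · rw [Matrix.one_apply_eq]
      rw [show mm i * fσ i * 1 * 1 = mm i * fσ i by ring, hmf i]
    · intro b _ hb
      rw [Matrix.one_apply_ne (Ne.symm hb)]
      ring
    · intro h
      exact absurd (Finset.mem_univ i) h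
  -- column norms
  have hAA : Aᵀ * A = 1 := by
    rw [hAdef, Matrix.transpose_mul, Matrix.transpose_transpose]
    calc Pmᵀ * U * (Uᵀ * Pm) = Pmᵀ * (U * Uᵀ) * Pm := by simp only [Matrix.mul_assoc]
      _ = 1 := by rw [hU', Matrix.mul_one]; exact hPm
  have hBB : Bᵀ * B = 1 := by
    rw [hBdef, Matrix.transpose_mul, Matrix.transpose_transpose]
    calc Pmᵀ * V * (Vᵀ * Pm) = Pmᵀ * (V * Vᵀ) * Pm := by simp only [Matrix.mul_assoc]
      _ = 1 := by rw [hV', Matrix.mul_one]; exact hPm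
  have hcol : ∀ (C : Matrix (Fin n) (Fin n) ℝ), Cᵀ * C = 1 → ∀ j, ∑ i, C i j ^ 2 = 1 := by
    intro C hC j
    have h := congrFun (congrFun hC j) j
    rw [Matrix.mul_apply] at h
    simp only [Matrix.transpose_apply] at h
    rw [Matrix.one_apply_eq] at h
    calc ∑ i, C i j ^ 2 = ∑ i, C i j * C i j := Finset.sum_congr rfl fun i _ => sq (C i j)
      _ = 1 := h
  have hCS : ∀ j, ∑ i, |A i j| * |B i j| ≤ 1 := by
    intro j
    have h2 := Finset.sum_mul_sq_le_sq_mul_sq Finset.univ (fun i => |A i j|) (fun i => |B i j|)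
    have e1 : ∑ i, |A i j| ^ 2 = 1 := by
      simp only [sq_abs]
      exact hcol A hAA j
    have e2 : ∑ i, |B i j| ^ 2 = 1 := by
      simp only [sq_abs]
      exact hcol B hBB j
    rw [e1, e2, one_mul] at h2
    have hnn : (0:ℝ) ≤ ∑ i, |A i j| * |B i j| :=
      Finset.sum_nonneg fun i _ => mul_nonneg (abs_nonneg _) (abs_nonneg _)
    nlinarith
  have hperj : ∀ j, |∑ i, mm i * A i j * B i j| ≤ 1 / μ := by
    intro j
    calc |∑ i, mm i * A i j * B i j| ≤ ∑ i, |mm i * A i j * B i j| :=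
          Finset.abs_sum_le_sum_abs _ _
      _ = ∑ i, mm i * (|A i j| * |B i j|) := by
          refine Finset.sum_congr rfl fun i _ => ?_
          rw [abs_mul, abs_mul, abs_of_nonneg (hm_nonneg i), mul_assoc]
      _ ≤ ∑ i, (1 / μ) * (|A i j| * |B i j|) := by
          refine Finset.sum_le_sum fun i _ => ?_
          exact mul_le_mul_of_nonneg_right (hm_le i)
            (mul_nonneg (abs_nonneg _) (abs_nonneg _))
      _ = (1 / μ) * ∑ i, |A i j| * |B i j| := by rw [Finset.mul_sum]
      _ ≤ (1 / μ) * 1 := mul_le_mul_of_nonneg_left (hCS j) hμ'.le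
      _ = 1 / μ := mul_one _
  have hI1bound : ∑ a, ∑ b, (Qt - Wstar) a b * W a b ≤ 1 / μ * ∑ j, |lam j| := by
    rw [I1, Finset.sum_comm]
    calc ∑ j, ∑ i, mm i * lam j * A i j * B i j
        = ∑ j, lam j * ∑ i, mm i * A i j * B i j := by
          refine Finset.sum_congr rfl fun j _ => ?_
          rw [Finset.mul_sum]
          exact Finset.sum_congr rfl fun i _ => by ring
      _ ≤ ∑ j, |lam j| * (1 / μ) := by
          refine Finset.sum_le_sum fun j _ => ?_
          calc lam j * ∑ i, mm i * A i j * B i j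
              ≤ |lam j * ∑ i, mm i * A i j * B i j| := le_abs_self _
            _ = |lam j| * |∑ i, mm i * A i j * B i j| := abs_mul _ _
            _ ≤ |lam j| * (1 / μ) := mul_le_mul_of_nonneg_left (hperj j) (abs_nonneg _)
      _ = 1 / μ * ∑ j, |lam j| := by rw [← Finset.sum_mul, mul_comm]
  -- frobenius expansion
  have hpt : ∀ a b, (W - Qt) a b ^ 2 = (W - Wstar) a b ^ 2 + (Wstar - Qt) a b ^ 2
      + 2 * ((Qt - Wstar) a b * Wstar a b - (Qt - Wstar) a b * W a b) := by
    intro a b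
    simp only [Matrix.sub_apply]
    ring
  have hexp : frobSq (W - Qt) = frobSq (W - Wstar) + frobSq (Wstar - Qt)
      + 2 * ((∑ a, ∑ b, (Qt - Wstar) a b * Wstar a b)
        - (∑ a, ∑ b, (Qt - Wstar) a b * W a b)) := by
    simp only [frobSq, hpt, Finset.sum_add_distrib]
    simp only [← Finset.mul_sum]
    simp only [Finset.sum_sub_distrib]
  have hposW : 0 < frobSq (W - Wstar) := Stmt12Aux.frobSq_pos (sub_ne_zero.mpr hWne)
  have hSi2 : ∑ i, 1 / μ * fσ i = 1 / μ * ∑ i, fσ i := (Finset.mul_sum _ _ _).symm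
  rw [hNW, hNWstar, hexp]
  linarith [hI1bound, hposW, I2, hSi2]
end
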